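/- Let p ∈ (1,∞) and let X be a real random variable with ‖X‖_{L^p} < ∞. Then for every u ∈ [0,1), |AVaR_u(X)| ≤ ‖X‖_{L^p} / (1−u)^{1/p}. -/

import Mathlib

open MeasureTheory ProbabilityTheory Filter Real
open scoped ENNReal NNReal

/-- The average value at risk `AVaR_u(X) = inf_m E[(X−m)⁺/(1−u) + m]`. -/
noncomputable def AVaR {Ω : Type*} [MeasurableSpace Ω] (P : Measure Ω) (u : ℝ)
    (X : Ω → ℝ) : ℝ :=
  ⨅ m : ℝ, ∫ ω, (max (X ω - m) 0 / (1 - u) + m) ∂P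

open Topology
section Aux
variable {Ω : Type*} [MeasurableSpace Ω] (P : Measure Ω) [IsProbabilityMeasure P]

theorem avar_aux (p : ℝ) (hp : 1 < p)
    (X : Ω → ℝ) (hXm : Measurable X) (hXint : Integrable X P)
    (hXmom : Integrable (fun ω => |X ω| ^ p) P)
    (u : ℝ) (hu : u ∈ Set.Ico (0:ℝ) 1) :
    |AVaR P u X| ≤ (∫ ω, |X ω| ^ p ∂P) ^ (1 / p) / (1 - u) ^ (1 / p) := by
  obtain ⟨hu0, hu1⟩ := hu
  set q : ℝ := 1 - u with hqdef
  have hq : 0 < q := by simp [hqdef]; linarith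
  have hq1 : q ≤ 1 := by simp [hqdef]; linarith
  set p' : ℝ := p / (p - 1) with hp'def
  have hpq : p.HolderConjugate p' := Real.HolderConjugate.conjExponent hp
  have hp0 : 0 < p := hpq.pos
  have hp'0 : 0 < p' := hpq.symm.pos
  have hp'1 : 1 < p' := hpq.symm.lt
  have hsum : 1 / p + 1 / p' = 1 := by simpa [one_div] using hpq.inv_add_inv_eq_one
  set C : ℝ := (∫ ω, |X ω| ^ p ∂P) ^ (1 / p) with hCdef
  have hC0 : 0 ≤ C := Real.rpow_nonneg (integral_nonneg fun ω => Real.rpow_nonneg (abs_nonneg _) p) _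
  -- integrability of the integrand
  have hgint : ∀ m : ℝ, Integrable (fun ω => max (X ω - m) 0 / q + m) P := by
    intro m
    exact (((hXint.sub (integrable_const m)).pos_part).div_const q).add (integrable_const m)
  -- lower bound on each inner integral
  have hEX : ∀ m : ℝ, ∫ ω, X ω ∂P ≤ ∫ ω, (max (X ω - m) 0 / q + m) ∂P := by
    intro m
    refine integral_mono hXint (hgint m) fun ω => ?_
    have h1 : max (X ω - m) 0 ≤ max (X ω - m) 0 / q :=
      le_div_self (le_max_right _ _) hq hq1
    have h2 : X ω - m ≤ max (X ω - m) 0 := le_max_left _ _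
    dsimp only
    linarith
  have hBdd : BddBelow (Set.range fun m : ℝ => ∫ ω, (max (X ω - m) 0 / q + m) ∂P) := by
    refine ⟨∫ ω, X ω ∂P, ?_⟩
    rintro x ⟨m, rfl⟩
    exact hEX m
  have hAVaRlow : ∫ ω, X ω ∂P ≤ AVaR P u X := le_ciInf hEX
  -- Memℒp facts and the L¹ bound via Hölder
  have hmemX : MemLp (fun ω => X ω) (ENNReal.ofReal p) P := by
    rw [← memLp_norm_rpow_iff (q := ENNReal.ofReal p) hXm.aestronglyMeasurable
      (by simp [hp0]) (by simp)]
    rw [ENNReal.toReal_ofReal hp0.le, ENNReal.div_self (by simp [hp0]) (by simp)]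
    rw [memLp_one_iff_integrable]
    simpa using hXmom
  have hmemXabs : MemLp (fun ω => |X ω|) (ENNReal.ofReal p) P := hmemX.abs
  have hHolder1 : ∫ ω, |X ω| ∂P ≤ C := by
    have h := integral_mul_le_Lp_mul_Lq_of_nonneg hpq
      (f := fun ω => |X ω|) (g := fun _ => 1)
      (Filter.Eventually.of_forall fun ω => abs_nonneg _)
      (Filter.Eventually.of_forall fun ω => zero_le_one) hmemXabs (memLp_const 1)
    simpa [Real.one_rpow, hp'0.ne', hCdef, one_div] using h
  have hEXabs : -C ≤ ∫ ω, X ω ∂P := by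
    have h1 : |∫ ω, X ω ∂P| ≤ ∫ ω, |X ω| ∂P := by
      simpa [Real.norm_eq_abs] using norm_integral_le_integral_norm (f := X) (μ := P)
    have h2 := neg_abs_le (∫ ω, X ω ∂P)
    linarith
  -- upper bound
  have hub : AVaR P u X ≤ C / q ^ (1 / p) := by
    rcases eq_or_lt_of_le hq1 with hcase | hcase
    · -- q = 1 (u = 0)
      have hXle : AVaR P u X ≤ ∫ ω, X ω ∂P := by
        have heq : ∀ n : ℕ, ∫ ω, (max (X ω - (-(n:ℝ))) 0 / q + (-(n:ℝ))) ∂P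
            = ∫ ω, max (X ω) (-(n:ℝ)) ∂P := by
          intro n
          congr 1
          funext ω
          rw [hcase, div_one, ← max_add_add_right, sub_add_cancel, zero_add]
        have key : Tendsto (fun n : ℕ => ∫ ω, max (X ω) (-(n:ℝ)) ∂P) atTop
            (𝓝 (∫ ω, X ω ∂P)) := by
          refine tendsto_integral_of_dominated_convergence (fun ω => |X ω|)
            (fun n => (hXm.max measurable_const).aestronglyMeasurable)
            hXint.abs (fun n => Filter.Eventually.of_forall fun ω => ?_)
            (Filter.Eventually.of_forall fun ω => ?_)
          · rw [Real.norm_eq_abs, abs_le]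
            refine ⟨le_trans (neg_abs_le _) (le_max_left _ _),
              max_le (le_abs_self _) (le_trans (by simp) (abs_nonneg (X ω)))⟩
          · refine Filter.Tendsto.congr' ?_ tendsto_const_nhds
            filter_upwards [eventually_ge_atTop ⌈-X ω⌉₊] with n hn
            exact (max_eq_left (by linarith [(Nat.ceil_le.mp hn : -X ω ≤ (n:ℝ))])).symm
        have h2 : AVaR P u X ≤ ∫ ω, X ω ∂P := by
          refine ge_of_tendsto key (Filter.Eventually.of_forall fun n => ?_)
          rw [← heq n]
          exact ciInf_le hBdd (-(n:ℝ))
        exact h2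
      have : ∫ ω, X ω ∂P ≤ C := le_trans (le_abs_self _) (by
        have h1 : |∫ ω, X ω ∂P| ≤ ∫ ω, |X ω| ∂P := by
          simpa [Real.norm_eq_abs] using norm_integral_le_integral_norm (f := X) (μ := P)
        linarith)
      rw [hcase, Real.one_rpow, div_one]
      linarith
    · -- q < 1, main case
      set Qe : ℝ≥0∞ := ENNReal.ofReal q with hQe
      have hQe0 : 0 < Qe := ENNReal.ofReal_pos.mpr hq
      have hQe1 : Qe < 1 := by
        rw [hQe, ← ENNReal.ofReal_one]
        exact (ENNReal.ofReal_lt_ofReal_iff one_pos).mpr hcase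
      set S : Set ℝ := {t | P {ω | t < X ω} ≤ Qe} with hSdef
      have hmeasA : ∀ t : ℝ, MeasurableSet {ω | t < X ω} := fun t => hXm measurableSet_Ioi
      have hmono : ∀ {s t : ℝ}, s ≤ t → {ω | t < X ω} ⊆ {ω | s < X ω} :=
        fun h ω hω => lt_of_le_of_lt h hω
      have hSne : S.Nonempty := by
        have hiI : (⋂ n : ℕ, {ω | (n:ℝ) < X ω}) = ∅ := by
          ext ω
          simp only [Set.mem_iInter, Set.mem_setOf_eq, Set.mem_empty_iff_false, iff_false,
            not_forall, not_lt]
          obtain ⟨n, hn⟩ := exists_nat_gt (X ω)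
          exact ⟨n, hn.le⟩
        have ht : Tendsto (fun n : ℕ => P {ω | (n:ℝ) < X ω}) atTop (𝓝 0) := by
          have h := tendsto_measure_iInter_atTop (μ := P) (s := fun n : ℕ => {ω | (n:ℝ) < X ω})
            (fun n => (hmeasA _).nullMeasurableSet)
            (fun i j hij => hmono (by exact_mod_cast hij))
            ⟨0, measure_ne_top P _⟩
          rw [hiI, measure_empty] at h
          exact h
        obtain ⟨n, hn⟩ := (ht.eventually_lt_const hQe0).exists
        exact ⟨n, hn.le⟩
      have hSbdd : BddBelow S := by
        have huniv : (⋃ n : ℕ, {ω | -(n:ℝ) < X ω}) = Set.univ := by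
          ext ω
          simp only [Set.mem_iUnion, Set.mem_setOf_eq, Set.mem_univ, iff_true]
          obtain ⟨n, hn⟩ := exists_nat_gt (-X ω)
          exact ⟨n, by linarith⟩
        have ht : Tendsto (fun n : ℕ => P {ω | -(n:ℝ) < X ω}) atTop (𝓝 1) := by
          have h := tendsto_measure_iUnion_atTop (μ := P)
            (s := fun n : ℕ => {ω | -(n:ℝ) < X ω})
            (fun i j hij => hmono (by push_cast; linarith [(Nat.cast_le (α := ℝ)).mpr hij]))
          rw [huniv, measure_univ] at h
          exact h
        obtain ⟨n, hn⟩ := (ht.eventually_const_lt hQe1).exists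
        refine ⟨-(n:ℝ), fun t ht' => ?_⟩
        by_contra hlt
        push_neg at hlt
        exact absurd (le_trans (measure_mono (hmono hlt.le)) ht') (not_le.mpr hn)
      set m : ℝ := sInf S with hm
      have key1 : P {ω | m < X ω} ≤ Qe := by
        have hsub : {ω | m < X ω} = ⋃ n : ℕ, {ω | m + 1/((n:ℝ)+1) < X ω} := by
          ext ω
          simp only [Set.mem_setOf_eq, Set.mem_iUnion]
          constructor
          · intro h
            obtain ⟨n, hn⟩ := exists_nat_one_div_lt (sub_pos.mpr h)
            exact ⟨n, by push_cast at hn ⊢; linarith⟩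
          · rintro ⟨n, hn⟩
            have hpos : (0:ℝ) < 1/((n:ℝ)+1) := by positivity
            linarith
        have heach : ∀ n : ℕ, P {ω | m + 1/((n:ℝ)+1) < X ω} ≤ Qe := by
          intro n
          have hlt : m < m + 1/((n:ℝ)+1) := by
            have hpos : (0:ℝ) < 1/((n:ℝ)+1) := by positivity
            linarith
          obtain ⟨s, hsS, hs⟩ := exists_lt_of_csInf_lt hSne hlt
          exact le_trans (measure_mono (hmono hs.le)) hsS
        have ht := tendsto_measure_iUnion_atTop (μ := P)
          (s := fun n : ℕ => {ω | m + 1/((n:ℝ)+1) < X ω})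
          (fun i j hij => hmono (by
            have h1 : ((i:ℝ)+1) ≤ ((j:ℝ)+1) := by push_cast; linarith [(Nat.cast_le (α := ℝ)).mpr hij]
            have := one_div_le_one_div_of_le (by positivity : (0:ℝ) < (i:ℝ)+1) h1
            linarith))
        rw [← hsub] at ht
        exact le_of_tendsto ht (Filter.Eventually.of_forall heach)
      have key2 : Qe ≤ P {ω | m ≤ X ω} := by
        have hsub : {ω | m ≤ X ω} = ⋂ n : ℕ, {ω | m - 1/((n:ℝ)+1) < X ω} := by
          ext ω
          simp only [Set.mem_setOf_eq, Set.mem_iInter]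
          constructor
          · intro h n
            have hpos : (0:ℝ) < 1/((n:ℝ)+1) := by positivity
            linarith
          · intro h
            by_contra hlt
            push_neg at hlt
            obtain ⟨n, hn⟩ := exists_nat_one_div_lt (sub_pos.mpr hlt)
            have h2 := h n
            push_cast at hn h2
            linarith
        have heach : ∀ n : ℕ, Qe ≤ P {ω | m - 1/((n:ℝ)+1) < X ω} := by
          intro n
          by_contra hle
          push_neg at hle
          have hmem : m - 1/((n:ℝ)+1) ∈ S := hle.le
          have h2 := csInf_le hSbdd hmem
          have hpos : (0:ℝ) < 1/((n:ℝ)+1) := by positivity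
          rw [← hm] at h2
          linarith
        have ht := tendsto_measure_iInter_atTop (μ := P)
          (s := fun n : ℕ => {ω | m - 1/((n:ℝ)+1) < X ω})
          (fun n => (hmeasA _).nullMeasurableSet)
          (fun i j hij => hmono (by
            have h1 : ((i:ℝ)+1) ≤ ((j:ℝ)+1) := by push_cast; linarith [(Nat.cast_le (α := ℝ)).mpr hij]
            have := one_div_le_one_div_of_le (by positivity : (0:ℝ) < (i:ℝ)+1) h1
            linarith)) ⟨0, measure_ne_top P _⟩
        rw [← hsub] at ht
        exact ge_of_tendsto ht (Filter.Eventually.of_forall heach)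
      -- the randomized indicator construction
      set Aset : Set Ω := {ω | m < X ω} with hAset
      set Bset : Set Ω := {ω | X ω = m} with hBset
      have hA : MeasurableSet Aset := hmeasA m
      have hB : MeasurableSet Bset := hXm (measurableSet_singleton m)
      have hdisj : Disjoint Aset Bset := by
        rw [Set.disjoint_left]
        intro ω h1 h2
        have h1' : m < X ω := h1
        have h2' : X ω = m := h2
        linarith
      set a : ℝ := (P Aset).toReal with hadef
      set d : ℝ := (P Bset).toReal with hddef
      have ha0 : 0 ≤ a := ENNReal.toReal_nonneg
      have hd0 : 0 ≤ d := ENNReal.toReal_nonneg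
      have haq : a ≤ q := ENNReal.toReal_le_of_le_ofReal hq.le key1
      have hunion : {ω | m ≤ X ω} = Aset ∪ Bset := by
        ext ω
        simp only [Set.mem_setOf_eq, Set.mem_union, hAset, hBset]
        constructor
        · intro h
          rcases lt_or_eq_of_le h with h | h
          · exact Or.inl h
          · exact Or.inr h.symm
        · rintro (h | h)
          · exact h.le
          · exact h.ge
      have hqad : q ≤ a + d := by
        have h1 : P {ω | m ≤ X ω} = P Aset + P Bset := by
          rw [hunion, measure_union hdisj hB]
        have h2 : Qe ≤ P Aset + P Bset := h1 ▸ key2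
        calc q = Qe.toReal := (ENNReal.toReal_ofReal hq.le).symm
          _ ≤ (P Aset + P Bset).toReal := ENNReal.toReal_mono
              (by simp [measure_ne_top]) h2
          _ = a + d := ENNReal.toReal_add (measure_ne_top _ _) (measure_ne_top _ _)
      set c : ℝ := if d = 0 then 0 else (q - a)/d with hcdef
      have hc0 : 0 ≤ c := by
        rw [hcdef]
        split
        · exact le_refl 0
        · next h => exact div_nonneg (by linarith) hd0
      have hc1 : c ≤ 1 := by
        rw [hcdef]
        split
        · exact zero_le_one
        · next h =>
            rw [div_le_one (lt_of_le_of_ne hd0 (Ne.symm h))]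
            linarith
      have hcd : c * d = q - a := by
        rw [hcdef]
        split
        · next h => rw [h]; ring_nf; linarith
        · next h => field_simp
      set W : Ω → ℝ := fun ω => Set.indicator Aset (fun _ => (1:ℝ)) ω
          + c * Set.indicator Bset (fun _ => (1:ℝ)) ω with hWdef
      have hWmeas : Measurable W :=
        (measurable_const.indicator hA).add ((measurable_const.indicator hB).const_mul c)
      have hW0 : ∀ ω, 0 ≤ W ω := fun ω =>
        add_nonneg (Set.indicator_nonneg (fun _ _ => zero_le_one) ω)
          (mul_nonneg hc0 (Set.indicator_nonneg (fun _ _ => zero_le_one) ω))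
      have hW1 : ∀ ω, W ω ≤ 1 := by
        intro ω
        rw [hWdef]
        by_cases h1 : ω ∈ Aset
        · have h2 : ω ∉ Bset := fun h => Set.disjoint_left.mp hdisj h1 h
          simp [Set.indicator_of_mem, Set.indicator_of_notMem, h1, h2]
        · by_cases h2 : ω ∈ Bset
          · simpa [Set.indicator_of_mem, Set.indicator_of_notMem, h1, h2] using hc1
          · simp [Set.indicator_of_notMem, h1, h2]
      have hWint : Integrable W P :=
        ((integrable_const (1:ℝ)).indicator hA).add
          (((integrable_const (1:ℝ)).indicator hB).const_mul c)
      have hintW : ∫ ω, W ω ∂P = q := by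
        rw [hWdef]
        rw [integral_add ((integrable_const _).indicator hA)
          (((integrable_const _).indicator hB).const_mul c),
          integral_const_mul, integral_indicator_const _ hA, integral_indicator_const _ hB]
        simp only [smul_eq_mul, mul_one, measureReal_def, ← hadef, ← hddef]
        linarith
      set I : ℝ := ∫ ω, Set.indicator Aset X ω ∂P with hIdef
      have hIint : Integrable (Set.indicator Aset X) P := hXint.indicator hA
      have hposmax : ∀ ω, max (X ω - m) 0 = Set.indicator Aset (fun ω => X ω - m) ω := by
        intro ω
        by_cases h : ω ∈ Aset
        · have h' : m < X ω := h
          rw [Set.indicator_of_mem h, max_eq_left (by linarith)]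
        · have h' : ¬ m < X ω := h
          rw [Set.indicator_of_notMem h, max_eq_right (by push_neg at h'; linarith)]
      have hmaxint : ∫ ω, max (X ω - m) 0 ∂P = I - m * a := by
        calc ∫ ω, max (X ω - m) 0 ∂P
            = ∫ ω, (Set.indicator Aset X ω - Set.indicator Aset (fun _ => m) ω) ∂P := by
              refine integral_congr_ae (Filter.Eventually.of_forall fun ω => ?_)
              dsimp only
              rw [hposmax ω]
              by_cases h : ω ∈ Aset <;>
                simp [Set.indicator_of_mem, Set.indicator_of_notMem, h]
          _ = I - m * a := by
              rw [integral_sub hIint ((integrable_const _).indicator hA),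
                integral_indicator_const _ hA]
              simp only [smul_eq_mul, measureReal_def, ← hadef, ← hIdef]
              ring
      have hfm : ∫ ω, (max (X ω - m) 0 / q + m) ∂P = (I + m * (q - a)) / q := by
        have hposint : Integrable (fun ω => max (X ω - m) 0) P := by
          simpa using (hXint.sub (integrable_const m)).pos_part
        rw [integral_add (hposint.div_const q) (integrable_const m),
          integral_div, hmaxint, integral_const]
        simp only [measureReal_def, measure_univ, ENNReal.toReal_one, smul_eq_mul, one_mul, mul_one]
        field_simp
        ring
      have hXWeq : ∫ ω, X ω * W ω ∂P = I + m * (q - a) := by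
        have hpt : ∀ ω, X ω * W ω
            = Set.indicator Aset X ω + c * (m * Set.indicator Bset (fun _ => (1:ℝ)) ω) := by
          intro ω
          rw [hWdef]
          by_cases h1 : ω ∈ Aset
          · have h2 : ω ∉ Bset := fun h => Set.disjoint_left.mp hdisj h1 h
            simp [Set.indicator_of_mem, Set.indicator_of_notMem, h1, h2]
          · by_cases h2 : ω ∈ Bset
            · have hXω : X ω = m := h2
              simp [Set.indicator_of_mem, Set.indicator_of_notMem, h1, h2, hXω]
              ring
            · simp [Set.indicator_of_notMem, h1, h2]
        have hmd : c * (m * d) = m * (q - a) := by rw [← hcd]; ring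
        calc ∫ ω, X ω * W ω ∂P
            = ∫ ω, (Set.indicator Aset X ω
                + c * (m * Set.indicator Bset (fun _ => (1:ℝ)) ω)) ∂P :=
              integral_congr_ae (Filter.Eventually.of_forall hpt)
          _ = I + m * (q - a) := by
              rw [integral_add hIint ((((integrable_const _).indicator hB).const_mul m).const_mul c),
                integral_const_mul, integral_const_mul, integral_indicator_const _ hB]
              simp only [smul_eq_mul, mul_one, measureReal_def, ← hddef, ← hIdef]
              linarith [hmd]
      -- Hölder
      have hmemW : MemLp W (ENNReal.ofReal p') P :=
        MemLp.of_bound hWmeas.aestronglyMeasurable 1 (Filter.Eventually.of_forall fun ω => by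
          rw [Real.norm_eq_abs, abs_of_nonneg (hW0 ω)]; exact hW1 ω)
      have hHolder : ∫ ω, |X ω| * W ω ∂P
          ≤ (∫ ω, |X ω| ^ p ∂P) ^ (1/p) * (∫ ω, W ω ^ p' ∂P) ^ (1/p') :=
        integral_mul_le_Lp_mul_Lq_of_nonneg hpq
          (Filter.Eventually.of_forall fun ω => abs_nonneg _)
          (Filter.Eventually.of_forall hW0) hmemXabs hmemW
      have hWp'meas : Measurable (fun ω => W ω ^ p') :=
        (Real.continuous_rpow_const hp'0.le).measurable.comp hWmeas
      have hWp'int : Integrable (fun ω => W ω ^ p') P := by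
        refine Integrable.mono' (integrable_const 1) hWp'meas.aestronglyMeasurable
          (Filter.Eventually.of_forall fun ω => ?_)
        rw [Real.norm_eq_abs, abs_of_nonneg (Real.rpow_nonneg (hW0 ω) _)]
        exact Real.rpow_le_one (hW0 ω) (hW1 ω) hp'0.le
      have hWp'le : ∫ ω, W ω ^ p' ∂P ≤ q := by
        have hmono2 : ∫ ω, W ω ^ p' ∂P ≤ ∫ ω, W ω ∂P := by
          refine integral_mono hWp'int hWint fun ω => ?_
          rcases eq_or_lt_of_le (hW0 ω) with h | h
          · rw [← h, Real.zero_rpow hp'0.ne']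
          · calc W ω ^ p' ≤ W ω ^ (1:ℝ) :=
                Real.rpow_le_rpow_of_exponent_ge h (hW1 ω) hp'1.le
              _ = W ω := Real.rpow_one _
        linarith [hintW]
      have hXWle : ∫ ω, X ω * W ω ∂P ≤ C * q ^ (1/p') := by
        have hXWint : Integrable (fun ω => X ω * W ω) P := by
          refine Integrable.mono' hXint.abs (hXm.mul hWmeas).aestronglyMeasurable
            (Filter.Eventually.of_forall fun ω => ?_)
          rw [Real.norm_eq_abs, abs_mul, abs_of_nonneg (hW0 ω)]
          exact mul_le_of_le_one_right (abs_nonneg _) (hW1 ω)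
        have hXWabsint : Integrable (fun ω => |X ω| * W ω) P := by
          refine Integrable.mono' hXint.abs (hXm.abs.mul hWmeas).aestronglyMeasurable
            (Filter.Eventually.of_forall fun ω => ?_)
          rw [Real.norm_eq_abs, abs_mul, abs_of_nonneg (hW0 ω), abs_abs]
          exact mul_le_of_le_one_right (abs_nonneg _) (hW1 ω)
        have h1 : ∫ ω, X ω * W ω ∂P ≤ ∫ ω, |X ω| * W ω ∂P :=
          integral_mono hXWint hXWabsint fun ω =>
            mul_le_mul_of_nonneg_right (le_abs_self _) (hW0 ω)
        have h2 : (∫ ω, W ω ^ p' ∂P) ^ (1/p') ≤ q ^ (1/p') :=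
          Real.rpow_le_rpow (integral_nonneg fun ω => Real.rpow_nonneg (hW0 ω) _)
            hWp'le (by positivity)
        calc ∫ ω, X ω * W ω ∂P ≤ (∫ ω, |X ω| ^ p ∂P) ^ (1/p) * (∫ ω, W ω ^ p' ∂P) ^ (1/p') :=
              le_trans h1 hHolder
          _ ≤ C * q ^ (1/p') := by
              rw [← hCdef]
              exact mul_le_mul_of_nonneg_left h2 hC0
      have hqq : C * q ^ (1/p') / q = C / q ^ (1/p) := by
        have h1 : q ^ (1/p') / q = q ^ (1/p' - 1) := by
          rw [Real.rpow_sub hq, Real.rpow_one]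
        have h2 : (1:ℝ)/p' - 1 = -(1/p) := by linarith
        rw [mul_div_assoc, h1, h2, Real.rpow_neg hq.le, div_eq_mul_inv]
        rw [div_eq_mul_inv]
      calc AVaR P u X ≤ ∫ ω, (max (X ω - m) 0 / q + m) ∂P := ciInf_le hBdd m
        _ = (I + m * (q - a)) / q := hfm
        _ ≤ C * q ^ (1/p') / q := by
            rw [← hXWeq]
            gcongr
        _ = C / q ^ (1/p) := hqq
  have hCle : C ≤ C / q ^ (1 / p) :=
    le_div_self hC0 (Real.rpow_pos_of_pos hq _) (Real.rpow_le_one hq.le hq1 (by positivity))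
  rw [abs_le]
  constructor
  · linarith
  · exact hub
end Aux

/-- moment bound `|AVaR_u(X)| ≤ ‖X‖_{L^p} / (1-u)^{1/p}`. -/
theorem avar_moment_bound
    {Ω : Type*} [MeasurableSpace Ω] (P : Measure Ω) [IsProbabilityMeasure P]
    (p : ℝ) (hp : 1 < p)
    (X : Ω → ℝ) (hXint : Integrable X P)
    (hXmom : Integrable (fun ω => |X ω| ^ p) P) :
    ∀ u : ℝ, u ∈ Set.Ico (0:ℝ) 1 →
      |AVaR P u X| ≤ (∫ ω, |X ω| ^ p ∂P) ^ (1 / p) / (1 - u) ^ (1 / p) := by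
  intro u hu
  have hXae : AEMeasurable X P := hXint.aemeasurable
  set X' : Ω → ℝ := hXae.mk X with hX'def
  have hX'm : Measurable X' := hXae.measurable_mk
  have hae : X =ᵐ[P] X' := hXae.ae_eq_mk
  have hX'int : Integrable X' P := hXint.congr hae
  have haep : (fun ω => |X ω| ^ p) =ᵐ[P] fun ω => |X' ω| ^ p := by
    filter_upwards [hae] with ω h
    rw [h]
  have hX'mom : Integrable (fun ω => |X' ω| ^ p) P := hXmom.congr haep
  have hint_eq : ∫ ω, |X ω| ^ p ∂P = ∫ ω, |X' ω| ^ p ∂P := integral_congr_ae haep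
  have hAVaR_eq : AVaR P u X = AVaR P u X' := by
    unfold AVaR
    refine iInf_congr fun m => integral_congr_ae ?_
    filter_upwards [hae] with ω h
    rw [h]
  rw [hAVaR_eq, hint_eq]
  exact avar_aux P p hp X' hX'm hX'int hX'mom u hu
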